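/- Energy–momentum conservation for the center-of-momentum parametrization of post-collisional momenta: Let p, q ∈ ℝ³ with p + q ≠ 0, let ω ∈ 𝕊², and define g := √(2(p⁰q⁰ − p·q − 1)), s := g² + 4, ξ := (p⁰+q⁰)/√s, p' := (p+q)/2 + (g/2)(ω + (ξ−1)(p+q)((p+q)·ω)/|p+q|²), and q' := (p+q)/2 − (g/2)(ω + (ξ−1)(p+q)((p+q)·ω)/|p+q|²). Then p' + q' = p + q and √(1+|p'|²) + √(1+|q'|²) = √(1+|p|²) + √(1+|q|²). -/

import Mathlib

open scoped InnerProductSpace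

noncomputable section

/-- Momentum space ℝ³ with the Euclidean structure. -/
abbrev E3 : Type := EuclideanSpace ℝ (Fin 3)

/-- The relativistic energy `p⁰ = √(1+|p|²)`. -/
def en (p : E3) : ℝ := Real.sqrt (1 + ‖p‖ ^ 2)

/-- The relative momentum `g(p,q) = √(2(p⁰q⁰ − p·q − 1))`. -/
def relg (p q : E3) : ℝ := Real.sqrt (2 * (en p * en q - ⟪p, q⟫_ℝ - 1))

/-- `s = g² + 4`. -/
def srel (p q : E3) : ℝ := relg p q ^ 2 + 4

/-- The post-collisional momentum `p'` in the center-of-momentum parametrization. -/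
def pPost (p q ω : E3) : E3 :=
  (2 : ℝ)⁻¹ • (p + q) + (relg p q / 2) •
    (ω + (((en p + en q) / Real.sqrt (srel p q) - 1) *
      (⟪p + q, ω⟫_ℝ / ‖p + q‖ ^ 2)) • (p + q))

/-- The post-collisional momentum `q' = p + q − p'`. -/
def qPost (p q ω : E3) : E3 := p + q - pPost p q ω

/-- The cosine of the scattering angle. -/
def cosTheta (p q ω : E3) : ℝ :=
  (-((en p - en q) * (en (pPost p q ω) - en (qPost p q ω))) +
    ⟪p - q, pPost p q ω - qPost p q ω⟫_ℝ) / relg p q ^ 2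

/-- The cross product on ℝ³ (transported to the Euclidean space structure). -/
def cross3 (p q : E3) : E3 :=
  (EuclideanSpace.equiv (Fin 3) ℝ).symm
    (crossProduct ((EuclideanSpace.equiv (Fin 3) ℝ) p) ((EuclideanSpace.equiv (Fin 3) ℝ) q))


/-- The post-collisional momentum `q'` written out explicitly. -/
def qPostExplicit (p q ω : E3) : E3 :=
  (2 : ℝ)⁻¹ • (p + q) - (relg p q / 2) •
    (ω + (((en p + en q) / Real.sqrt (srel p q) - 1) *
      (⟪p + q, ω⟫_ℝ / ‖p + q‖ ^ 2)) • (p + q))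

lemma keyalg (E r n g c : ℝ) (hr : r ≠ 0) (hn : n ≠ 0)
    (hE2 : E^2 = r^2 + n) (hg2 : g^2 = r^2 - 4) :
    1 + (((2⁻¹ + (g/2)*((E/r - 1)*(c/n)))^2 * n
      + 2*(2⁻¹ + (g/2)*((E/r - 1)*(c/n)))*(g/2)*c + (g/2)^2))
      = (E/2 + g/(2*r)*c)^2 := by
  field_simp
  linear_combination (r^2*n) * hg2 + (g^2*c^2 - r^2*n) * hE2

lemma keyalg2 (E r n g c : ℝ) (hr : r ≠ 0) (hn : n ≠ 0)
    (hE2 : E^2 = r^2 + n) (hg2 : g^2 = r^2 - 4) :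
    1 + (((2⁻¹ - (g/2)*((E/r - 1)*(c/n)))^2 * n
      + 2*(2⁻¹ - (g/2)*((E/r - 1)*(c/n)))*(-(g/2))*c + (-(g/2))^2))
      = (E/2 - g/(2*r)*c)^2 := by
  field_simp
  linear_combination (r^2*n) * hg2 + (g^2*c^2 - r^2*n) * hE2

lemma norm_decomp (P ω : E3) (a b : ℝ) (hω : ‖ω‖ = 1) :
    ‖a • P + b • ω‖^2 = a^2*‖P‖^2 + 2*a*b*⟪P, ω⟫_ℝ + b^2 := by
  rw [norm_add_sq_real, real_inner_smul_left, real_inner_smul_right, norm_smul, norm_smul, hω]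
  simp only [mul_pow, sq_abs, Real.norm_eq_abs, mul_one]
  ring

lemma en_eq (X : E3) (t : ℝ) (h : 1 + ‖X‖^2 = t^2) (ht : 0 ≤ t) : en X = t := by
  rw [en, h, Real.sqrt_sq ht]

/-- **Energy–momentum conservation for the center-of-momentum parametrization of
the post-collisional momenta.** -/
theorem post_collisional_conservation (p q ω : E3)
    (hpq : p + q ≠ 0) (hω : ‖ω‖ = 1) :
    pPost p q ω + qPostExplicit p q ω = p + q ∧
    en (pPost p q ω) + en (qPostExplicit p q ω) = en p + en q := by
  have hfirst : pPost p q ω + qPostExplicit p q ω = p + q := by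
    unfold pPost qPostExplicit; module
  refine ⟨hfirst, ?_⟩
  have hnpos : (0:ℝ) < ‖p + q‖ ^ 2 := by
    have := norm_pos_iff.mpr hpq; positivity
  have henp : en p ^ 2 = 1 + ‖p‖ ^ 2 := Real.sq_sqrt (by positivity)
  have henq : en q ^ 2 = 1 + ‖q‖ ^ 2 := Real.sq_sqrt (by positivity)
  have henp1 : 1 ≤ en p := by
    rw [show (1:ℝ) = Real.sqrt 1 by simp]
    exact Real.sqrt_le_sqrt (by nlinarith [sq_nonneg ‖p‖])
  have henq1 : 1 ≤ en q := by
    rw [show (1:ℝ) = Real.sqrt 1 by simp]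
    exact Real.sqrt_le_sqrt (by nlinarith [sq_nonneg ‖q‖])
  have hip : ⟪p, q⟫_ℝ ≤ ‖p‖ * ‖q‖ := real_inner_le_norm p q
  have hprod : (en p * en q) ^ 2 = (1 + ‖p‖ ^ 2) * (1 + ‖q‖ ^ 2) := by
    rw [mul_pow, henp, henq]
  have h1 : (1 + ‖p‖ * ‖q‖) ^ 2 ≤ (en p * en q) ^ 2 := by
    rw [hprod]; nlinarith [sq_nonneg (‖p‖ - ‖q‖)]
  have h2 : 1 + ‖p‖ * ‖q‖ ≤ en p * en q :=
    le_of_pow_le_pow_left₀ two_ne_zero (by nlinarith) h1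
  have hcs : 0 ≤ 2 * (en p * en q - ⟪p, q⟫_ℝ - 1) := by nlinarith
  have hg0 : 0 ≤ relg p q := Real.sqrt_nonneg _
  have hg2 : relg p q ^ 2 = 2 * (en p * en q - ⟪p, q⟫_ℝ - 1) := Real.sq_sqrt hcs
  have hnorm : ‖p + q‖ ^ 2 = ‖p‖ ^ 2 + 2 * ⟪p, q⟫_ℝ + ‖q‖ ^ 2 := norm_add_sq_real p q
  have hEexp : (en p + en q) ^ 2 = en p ^ 2 + 2 * (en p * en q) + en q ^ 2 := by ring
  have hsrel : srel p q = (en p + en q) ^ 2 - ‖p + q‖ ^ 2 := by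
    rw [srel]; linarith [hg2, hnorm, henp, henq, hEexp]
  have hsrelpos : (0:ℝ) < srel p q := by rw [srel]; positivity
  have hrpos : 0 < Real.sqrt (srel p q) := Real.sqrt_pos.mpr hsrelpos
  have hr2 : Real.sqrt (srel p q) ^ 2 = (en p + en q) ^ 2 - ‖p + q‖ ^ 2 := by
    rw [Real.sq_sqrt hsrelpos.le, hsrel]
  have hE2 : (en p + en q) ^ 2 = Real.sqrt (srel p q) ^ 2 + ‖p + q‖ ^ 2 := by linarith
  have hg2' : relg p q ^ 2 = Real.sqrt (srel p q) ^ 2 - 4 := by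
    have hss : srel p q = relg p q ^ 2 + 4 := rfl
    rw [Real.sq_sqrt hsrelpos.le]; linarith [hss]
  have hEpos : (0:ℝ) < en p + en q := by linarith
  have hgr : relg p q ≤ Real.sqrt (srel p q) :=
    calc relg p q = Real.sqrt (relg p q ^ 2) := (Real.sqrt_sq hg0).symm
      _ ≤ Real.sqrt (srel p q) := Real.sqrt_le_sqrt (by rw [srel]; linarith)
  have hcP : |⟪p + q, ω⟫_ℝ| ≤ ‖p + q‖ := by
    have := abs_real_inner_le_norm (p + q) ω
    rwa [hω, mul_one] at this
  have hnE : ‖p + q‖ ≤ en p + en q := by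
    have h : ‖p + q‖ ^ 2 ≤ (en p + en q) ^ 2 := by
      linarith [hE2, sq_nonneg (Real.sqrt (srel p q))]
    exact le_of_pow_le_pow_left₀ two_ne_zero hEpos.le h
  have hgc : relg p q * |⟪p + q, ω⟫_ℝ| ≤ Real.sqrt (srel p q) * (en p + en q) :=
    mul_le_mul hgr (hcP.trans hnE) (abs_nonneg _) hrpos.le
  have habs : |relg p q / (2 * Real.sqrt (srel p q)) * ⟪p + q, ω⟫_ℝ| ≤ (en p + en q) / 2 := by
    rw [abs_mul, abs_div, abs_of_nonneg hg0, abs_of_nonneg (by positivity : (0:ℝ) ≤ 2 * Real.sqrt (srel p q))]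
    rw [div_mul_eq_mul_div, div_le_div_iff₀ (by positivity) two_pos]
    nlinarith [hgc]
  have hpos1 : 0 ≤ (en p + en q) / 2 + relg p q / (2 * Real.sqrt (srel p q)) * ⟪p + q, ω⟫_ℝ := by
    have := abs_le.mp habs; linarith [this.1]
  have hpos2 : 0 ≤ (en p + en q) / 2 - relg p q / (2 * Real.sqrt (srel p q)) * ⟪p + q, ω⟫_ℝ := by
    have := abs_le.mp habs; linarith [this.2]
  have hdp : pPost p q ω =
      (2⁻¹ + (relg p q / 2) * (((en p + en q) / Real.sqrt (srel p q) - 1) *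
        (⟪p + q, ω⟫_ℝ / ‖p + q‖ ^ 2))) • (p + q) + (relg p q / 2) • ω := by
    unfold pPost; module
  have hdq : qPostExplicit p q ω =
      (2⁻¹ - (relg p q / 2) * (((en p + en q) / Real.sqrt (srel p q) - 1) *
        (⟪p + q, ω⟫_ℝ / ‖p + q‖ ^ 2))) • (p + q) + (-(relg p q / 2)) • ω := by
    unfold qPostExplicit; module
  have henP : en (pPost p q ω) =
      (en p + en q) / 2 + relg p q / (2 * Real.sqrt (srel p q)) * ⟪p + q, ω⟫_ℝ := by
    apply en_eq _ _ _ hpos1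
    rw [hdp, norm_decomp _ _ _ _ hω]
    have := keyalg (en p + en q) (Real.sqrt (srel p q)) (‖p + q‖ ^ 2) (relg p q)
      (⟪p + q, ω⟫_ℝ) hrpos.ne' hnpos.ne' hE2 hg2'
    linear_combination this
  have henQ : en (qPostExplicit p q ω) =
      (en p + en q) / 2 - relg p q / (2 * Real.sqrt (srel p q)) * ⟪p + q, ω⟫_ℝ := by
    apply en_eq _ _ _ hpos2
    rw [hdq, norm_decomp _ _ _ _ hω]
    have := keyalg2 (en p + en q) (Real.sqrt (srel p q)) (‖p + q‖ ^ 2) (relg p q)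
      (⟪p + q, ω⟫_ℝ) hrpos.ne' hnpos.ne' hE2 hg2'
    linear_combination this
  rw [henP, henQ]; ring
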